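/- arXiv:2602.17859 — 2 statements merged into one kernel-verified Lean document; each statement's English description precedes it below -/
import Mathlib

section
/- Let n ≥ 4 be an integer. If K is an isometric filling of the cycle graph C_n, then the number of vertices of K satisfies |V(K)| ≥ n²/8. -/
set_option linter.unusedSectionVars false
set_option linter.unusedVariables false
set_option maxHeartbeats 1000000


open SimpleGraph Finset

/-- An abstract triangulation: a finite nonempty set of triangles (3-element
vertex sets) such that every edge (2-element subset of a triangle) lies in
exactly 1 or 2 triangles. -/
structure AbstractTriangulation (V : Type) [DecidableEq V] [Fintype V] where
  tris : Finset (Finset V)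
  tris_nonempty : tris.Nonempty
  card_three : ∀ t ∈ tris, t.card = 3
  edge_mem : ∀ e : Finset V, e.card = 2 → (∃ t ∈ tris, e ⊆ t) →
    (tris.filter fun t => e ⊆ t).card = 1 ∨ (tris.filter fun t => e ⊆ t).card = 2

namespace AbstractTriangulation

variable {V : Type} [DecidableEq V] [Fintype V]

/-- The vertex set `V(K)`: vertices lying in some triangle. -/
def verts (K : AbstractTriangulation V) : Finset V := K.tris.biUnion id

/-- The edge set `E(K)`: 2-element subsets of triangles. -/
def edges (K : AbstractTriangulation V) : Finset (Finset V) :=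
  K.tris.biUnion fun t => t.powersetCard 2

/-- The 1-skeleton of `K`: `u,v` adjacent iff `{u,v}` is an edge of `K`. -/
def skeleton (K : AbstractTriangulation V) : SimpleGraph V where
  Adj u v := u ≠ v ∧ ∃ t ∈ K.tris, u ∈ t ∧ v ∈ t
  symm := by constructor; rintro u v ⟨h, t, ht, hu, hv⟩; exact ⟨h.symm, t, ht, hv, hu⟩
  loopless := by constructor; rintro u ⟨h, -⟩; exact h rfl

/-- The boundary `∂K`: the graph on the vertices of `K` whose edges are the
edges of `K` contained in exactly one triangle. -/
def boundary (K : AbstractTriangulation V) : SimpleGraph V where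
  Adj u v := u ≠ v ∧ (K.tris.filter fun t => u ∈ t ∧ v ∈ t).card = 1
  symm := by
    constructor
    rintro u v ⟨h, hc⟩
    exact ⟨h.symm, by simpa [and_comm] using hc⟩
  loopless := by constructor; rintro u ⟨h, -⟩; exact h rfl

/-- `∂K` is (isomorphic to) the cycle `C_n`, with the identification given by
`f : Fin n → V`: `f` is injective, boundary adjacency corresponds exactly to
cycle adjacency, and every boundary edge joins two vertices in the image of `f`. -/
def BoundaryIsCycle (K : AbstractTriangulation V) (n : ℕ) (f : Fin n → V) : Prop :=
  Function.Injective f ∧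
  (∀ i j : Fin n, K.boundary.Adj (f i) (f j) ↔ (cycleGraph n).Adj i j) ∧
  (∀ u v : V, K.boundary.Adj u v → (∃ i, u = f i) ∧ (∃ j, v = f j))

/-- `K` is a `δ`-Lipschitz filling of `C_n` (with boundary identification `f`):
`∂K = C_n` and `d_K(x,y) ≥ δ · d_{C_n}(x,y)` for all boundary vertices, expressed
by the fact that every walk in the 1-skeleton between boundary vertices has
length at least `δ · d_{C_n}(x,y)`. -/
def IsLipschitzFilling (K : AbstractTriangulation V) (n : ℕ) (δ : ℝ)
    (f : Fin n → V) : Prop :=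
  K.BoundaryIsCycle n f ∧
  ∀ (i j : Fin n) (p : K.skeleton.Walk (f i) (f j)),
    δ * ((cycleGraph n).dist i j : ℝ) ≤ (p.length : ℝ)

end AbstractTriangulation

namespace AbstractTriangulation

/-- `K` is an isometric filling of `C_n` (with boundary identification `f`):
`∂K = C_n` and `d_K(x,y) = d_{C_n}(x,y)` for all boundary vertices. -/
def IsIsometricFilling {V : Type} [DecidableEq V] [Fintype V]
    (K : AbstractTriangulation V) (n : ℕ) (f : Fin n → V) : Prop :=
  K.BoundaryIsCycle n f ∧
  ∀ i j : Fin n, K.skeleton.dist (f i) (f j) = (SimpleGraph.cycleGraph n).dist i j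

end AbstractTriangulation


section CycAux

variable {n : ℕ}


variable {n : ℕ}

lemma fin_sub_val_lin (hn : 0 < n) (a b : Fin n) :
    (a - b).val + b.val = a.val ∨ (a - b).val + b.val = a.val + n := by
  have hval : (a - b).val = (n - b.val + a.val) % n := by rw [Fin.sub_def]
  have hb := b.is_lt
  have ha := a.is_lt
  rcases Nat.lt_or_ge (n - b.val + a.val) n with h | h
  · rw [Nat.mod_eq_of_lt h] at hval; omega
  · rw [Nat.mod_eq_sub_mod h, Nat.mod_eq_of_lt (by omega)] at hval; omega

lemma fin_add_one_val_lin [NeZero n] (hn : 2 ≤ n) (a : Fin n) :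
    (a + 1).val = a.val + 1 ∨ (a + 1).val + n = a.val + 1 := by
  have h1 : (1 : Fin n).val = 1 := by
    rw [Fin.val_one']; exact Nat.mod_eq_of_lt (by omega)
  have hval : (a + 1).val = (a.val + (1 : Fin n).val) % n := by rw [Fin.add_def]
  rw [h1] at hval
  have ha := a.is_lt
  rcases Nat.lt_or_ge (a.val + 1) n with h | h
  · rw [Nat.mod_eq_of_lt h] at hval; omega
  · rw [Nat.mod_eq_sub_mod h, Nat.mod_eq_of_lt (by omega)] at hval; omega

lemma cyc_walk_lower (hn : 2 ≤ n) {u v : Fin n} (p : (cycleGraph n).Walk u v) :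
    min ((v - u).val) ((u - v).val) ≤ p.length := by
  induction p with
  | nil =>
    haveI : NeZero n := ⟨by omega⟩
    simp [Fin.sub_self]
  | @cons u w v h q ih =>
    have hn0 : 0 < n := by omega
    have h1 := cycleGraph_adj'.mp h
    have h2 := fin_sub_val_lin hn0 v u
    have h3 := fin_sub_val_lin hn0 u v
    have h4 := fin_sub_val_lin hn0 v w
    have h5 := fin_sub_val_lin hn0 w v
    have h6 := fin_sub_val_lin hn0 u w
    have h7 := fin_sub_val_lin hn0 w u
    have b1 := (v - u).is_lt; have b2 := (u - v).is_lt
    have b3 := (v - w).is_lt; have b4 := (w - v).is_lt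
    have b5 := (u - w).is_lt; have b6 := (w - u).is_lt
    have hu := u.is_lt; have hv := v.is_lt; have hw := w.is_lt
    rw [SimpleGraph.Walk.length_cons]
    omega

lemma cyc_dist_upper (hn : 2 ≤ n) (a : ℕ) (i j : Fin n) (hij : (j - i).val = a) :
    (cycleGraph n).dist i j ≤ a := by
  haveI : NeZero n := ⟨by omega⟩
  induction a generalizing i with
  | zero =>
    have : j = i := by
      have := fin_sub_val_lin (by omega) j i
      have hi := i.is_lt; have hj := j.is_lt
      apply Fin.ext; omega
    subst this; simp
  | succ a ih =>
    have hn0 : 0 < n := by omega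
    have hadj : (cycleGraph n).Adj i (i + 1) := by
      rw [cycleGraph_adj']
      have h0 := fin_add_one_val_lin hn i
      have h2 := fin_sub_val_lin hn0 (i + 1) i
      have b := (i + 1 - i).is_lt
      have hi := i.is_lt; have hi1 := (i+1).is_lt
      right
      omega
    have hstep : (j - (i + 1)).val = a := by
      have h2 := fin_sub_val_lin hn0 j (i + 1)
      have h3 := fin_sub_val_lin hn0 j i
      have h4 := fin_add_one_val_lin hn i
      have b1 := (j - (i+1)).is_lt; have b2 := (j - i).is_lt
      have hi := i.is_lt; have hj := j.is_lt; have hi1 := (i+1).is_lt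
      omega
    have hr : (cycleGraph n).Reachable (i + 1) j := by
      have hc : (cycleGraph n).Connected := by
        rw [show n = (n-1) + 1 by omega]
        exact cycleGraph_connected
      exact hc (i + 1) j
    obtain ⟨p, hp⟩ := hr.exists_walk_length_eq_dist
    have hle := SimpleGraph.dist_le (SimpleGraph.Walk.cons hadj p)
    rw [SimpleGraph.Walk.length_cons, hp] at hle
    have := ih (i+1) hstep
    omega

lemma cycleGraph_dist_eq (hn : 2 ≤ n) (i j : Fin n) :
    (cycleGraph n).dist i j = min ((j - i).val) ((i - j).val) := by
  apply le_antisymm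
  · apply le_min
    · exact cyc_dist_upper hn _ i j rfl
    · rw [SimpleGraph.dist_comm]
      exact cyc_dist_upper hn _ j i rfl
  · have hr : (cycleGraph n).Reachable i j := by
      have hc : (cycleGraph n).Connected := by
        rw [show n = (n-1) + 1 by omega]
        exact cycleGraph_connected
      exact hc i j
    obtain ⟨p, hp⟩ := hr.exists_walk_length_eq_dist
    have := cyc_walk_lower hn p
    omega

end CycAux

section MainAux

open AbstractTriangulation

variable {V : Type} [DecidableEq V] [Fintype V]

lemma mem_verts_iff {K : AbstractTriangulation V} {v : V} :
    v ∈ K.verts ↔ ∃ t ∈ K.tris, v ∈ t := by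
  simp [AbstractTriangulation.verts]

lemma mem_edges_iff {K : AbstractTriangulation V} {e : Finset V} :
    e ∈ K.edges ↔ e.card = 2 ∧ ∃ t ∈ K.tris, e ⊆ t := by
  simp only [AbstractTriangulation.edges, Finset.mem_biUnion, Finset.mem_powersetCard]
  tauto

lemma skel_adj_of_mem {K : AbstractTriangulation V} {t : Finset V} {u v : V}
    (ht : t ∈ K.tris) (hu : u ∈ t) (hv : v ∈ t) (huv : u ≠ v) :
    K.skeleton.Adj u v := ⟨huv, t, ht, hu, hv⟩

lemma dist_adj_le {K : AbstractTriangulation V} {b u v : V}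
    (h : K.skeleton.Adj u v) :
    K.skeleton.dist b v ≤ K.skeleton.dist b u + 1 := by
  by_cases hr : K.skeleton.Reachable b u
  · obtain ⟨p, hp⟩ := hr.exists_walk_length_eq_dist
    have := SimpleGraph.dist_le (p.concat h)
    rwa [SimpleGraph.Walk.length_concat, hp] at this
  · have hrv : ¬ K.skeleton.Reachable b v := fun h' => hr (h'.trans h.symm.reachable)
    rw [SimpleGraph.dist_eq_zero_of_not_reachable hrv]
    omega

lemma pair_subset_triple {x y z a b : V} (hab : a ≠ b)
    (h : ({a, b} : Finset V) ⊆ {x, y, z}) :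
    ({a, b} : Finset V) = {x, y} ∨ ({a, b} : Finset V) = {x, z} ∨
      ({a, b} : Finset V) = {y, z} := by
  have ha : a ∈ ({x, y, z} : Finset V) := h (by simp)
  have hb : b ∈ ({x, y, z} : Finset V) := h (by simp)
  simp only [Finset.mem_insert, Finset.mem_singleton] at ha hb
  rcases ha with rfl | rfl | rfl <;> rcases hb with rfl | rfl | rfl <;>
    first
      | exact absurd rfl hab
      | (left; rfl)
      | (left; exact Finset.pair_comm _ _)
      | (right; left; rfl)
      | (right; left; exact Finset.pair_comm _ _)
      | (right; right; rfl)
      | (right; right; exact Finset.pair_comm _ _)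

lemma boundary_filter_eq {K : AbstractTriangulation V} (u v : V) :
    (K.tris.filter fun t => u ∈ t ∧ v ∈ t) = (K.tris.filter fun t => ({u, v} : Finset V) ⊆ t) := by
  apply Finset.filter_congr
  intro t _
  simp [Finset.insert_subset_iff]

/-- The sphere of radius `k` about `b`, within the vertices of `K`. -/
noncomputable def sph (K : AbstractTriangulation V) (b : V) (k : ℕ) : Finset V :=
  K.verts.filter (fun v => K.skeleton.dist b v = k)

/-- Edges of `K` crossing between distance `k-1` and distance `k` from `b`. -/
noncomputable def crossSet (K : AbstractTriangulation V) (b : V) (k : ℕ) : Finset (Finset V) :=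
  K.edges.filter (fun e => (∃ u ∈ e, K.skeleton.dist b u + 1 = k) ∧
    (∃ v ∈ e, K.skeleton.dist b v = k))

/-- Graph structure on crossing edges: adjacent if they share a triangle. -/
noncomputable def crossGraph (K : AbstractTriangulation V) (b : V) (k : ℕ) :
    SimpleGraph (Finset V) where
  Adj e e' := e ≠ e' ∧ e ∈ crossSet K b k ∧ e' ∈ crossSet K b k ∧
    ∃ t ∈ K.tris, e ⊆ t ∧ e' ⊆ t
  symm := by constructor; rintro e e' ⟨h1, h2, h3, t, ht, hs, hs'⟩; exact ⟨h1.symm, h3, h2, t, ht, hs', hs⟩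
  loopless := by constructor; rintro e ⟨h1, -⟩; exact h1 rfl

noncomputable instance crossGraphDec (K : AbstractTriangulation V) (b : V) (k : ℕ) :
    DecidableRel (crossGraph K b k).Adj := fun _ _ => Classical.dec _

/-- The induced subgraph of the skeleton on the sphere of radius `k`. -/
noncomputable def sphGraph (K : AbstractTriangulation V) (b : V) (k : ℕ) :
    SimpleGraph V where
  Adj u v := K.skeleton.Adj u v ∧ K.skeleton.dist b u = k ∧ K.skeleton.dist b v = k
  symm := by constructor; rintro u v ⟨h1, h2, h3⟩; exact ⟨h1.symm, h3, h2⟩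
  loopless := by constructor; rintro u ⟨h1, -⟩; exact h1.ne rfl

lemma cross_decomp {K : AbstractTriangulation V} {b : V} {k : ℕ} (hk : 1 ≤ k)
    {e : Finset V} (he : e ∈ crossSet K b k) :
    ∃ u v, e = {u, v} ∧ u ≠ v ∧ K.skeleton.dist b u + 1 = k ∧ K.skeleton.dist b v = k := by
  rw [crossSet, Finset.mem_filter] at he
  obtain ⟨hedge, ⟨u, hu, hu'⟩, ⟨v, hv, hv'⟩⟩ := he
  have hcard : e.card = 2 := (mem_edges_iff.mp hedge).1
  have huv : u ≠ v := by rintro rfl; omega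
  refine ⟨u, v, ?_, huv, hu', hv'⟩
  apply Finset.eq_of_subset_of_card_le _ (by rw [hcard, Finset.card_pair huv]) |>.symm
  intro x hx
  simp only [Finset.mem_insert, Finset.mem_singleton] at hx
  rcases hx with rfl | rfl <;> assumption

/-- In a triangle containing a crossing edge, there is exactly one other crossing edge. -/
lemma partner_exists_unique {K : AbstractTriangulation V} {b : V} {k : ℕ} (hk : 1 ≤ k)
    {e t : Finset V} (ht : t ∈ K.tris) (he : e ∈ crossSet K b k) (hsub : e ⊆ t) :
    ∃! e', e' ∈ crossSet K b k ∧ e' ⊆ t ∧ e' ≠ e := by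
  classical
  obtain ⟨u, v, rfl, huv, hu, hv⟩ := cross_decomp hk he
  have htc : t.card = 3 := K.card_three t ht
  -- third vertex w
  have hcard2 : ({u, v} : Finset V).card = 2 := Finset.card_pair huv
  have hsd : (t \ {u, v}).card = 1 := by
    rw [Finset.card_sdiff_of_subset hsub, htc, hcard2]
  obtain ⟨w, hw⟩ := Finset.card_eq_one.mp hsd
  have hwt : w ∈ t := by
    have : w ∈ t \ {u, v} := by rw [hw]; exact Finset.mem_singleton_self w
    exact (Finset.mem_sdiff.mp this).1
  have hwuv : w ∉ ({u, v} : Finset V) := by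
    have : w ∈ t \ {u, v} := by rw [hw]; exact Finset.mem_singleton_self w
    exact (Finset.mem_sdiff.mp this).2
  have hwu : w ≠ u := fun h => hwuv (by simp [h])
  have hwv : w ≠ v := fun h => hwuv (by simp [h])
  have hut : u ∈ t := hsub (by simp)
  have hvt : v ∈ t := hsub (by simp)
  have hteq : t = {u, v, w} := by
    have hsub2 : t ⊆ {u, v, w} := by
      intro x hx
      by_cases hxu : x = u
      · simp [hxu]
      by_cases hxv : x = v
      · simp [hxv]
      have hx' : x ∈ t \ {u, v} := Finset.mem_sdiff.mpr ⟨hx, by simp [hxu, hxv]⟩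
      rw [hw] at hx'
      simp only [Finset.mem_singleton] at hx'
      simp [hx']
    refine Finset.eq_of_subset_of_card_le hsub2 ?_
    rw [htc]
    refine le_trans (Finset.card_insert_le _ _) (Nat.succ_le_succ ?_)
    refine le_trans (Finset.card_insert_le _ _) (Nat.succ_le_succ ?_)
    simp
  have hDw1 : K.skeleton.dist b w ≤ K.skeleton.dist b u + 1 :=
    dist_adj_le (skel_adj_of_mem ht hut hwt hwu.symm)
  have hDw2 : K.skeleton.dist b v ≤ K.skeleton.dist b w + 1 :=
    dist_adj_le (skel_adj_of_mem ht hwt hvt hwv)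
  have hDw : K.skeleton.dist b w + 1 = k ∨ K.skeleton.dist b w = k := by omega
  -- the partner is {w,v} when D w = k - 1, and {u,w} when D w = k
  have hedge_mem : ∀ x y : V, x ≠ y → x ∈ t → y ∈ t →
      ({x, y} : Finset V) ∈ K.edges := by
    intro x y hxy hx hy
    rw [mem_edges_iff]
    refine ⟨Finset.card_pair hxy, t, ht, ?_⟩
    intro z hz
    rcases Finset.mem_insert.mp hz with rfl | hz
    · exact hx
    · rw [Finset.mem_singleton.mp hz]; exact hy
  rcases hDw with hcase | hcase
  · -- partner = {w, v}
    have hwv' : w ≠ v := hwv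
    refine ⟨{w, v}, ⟨?_, ?_, ?_⟩, ?_⟩
    · rw [crossSet, Finset.mem_filter]
      exact ⟨hedge_mem w v hwv' hwt hvt, ⟨w, by simp, hcase⟩, ⟨v, by simp, hv⟩⟩
    · intro x hx
      rcases Finset.mem_insert.mp hx with rfl | hx
      · exact hwt
      · rw [Finset.mem_singleton.mp hx]; exact hvt
    · intro h
      exact hwuv (h ▸ (by simp : w ∈ ({w, v} : Finset V)))
    · -- uniqueness
      rintro e'' ⟨he'', hsub'', hne''⟩
      obtain ⟨u'', v'', rfl, huv'', hu'', hv''⟩ := cross_decomp hk he''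
      have := pair_subset_triple huv'' (hteq ▸ hsub'')
      rcases this with h3 | h3 | h3
      · exact absurd h3 hne''
      · -- {u'',v''} = {u, w} : impossible, since it has a vertex at distance k
        exfalso
        have hm : v'' ∈ ({u, w} : Finset V) := h3 ▸ (by simp : v'' ∈ ({u'', v''} : Finset V))
        rcases Finset.mem_insert.mp hm with rfl | hm
        · omega
        · rw [Finset.mem_singleton.mp hm] at hv''; omega
      · rw [h3]; exact Finset.pair_comm v w
  · -- partner = {u, w}
    refine ⟨{u, w}, ⟨?_, ?_, ?_⟩, ?_⟩
    · rw [crossSet, Finset.mem_filter]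
      exact ⟨hedge_mem u w hwu.symm hut hwt, ⟨u, by simp, hu⟩, ⟨w, by simp, hcase⟩⟩
    · intro x hx
      rcases Finset.mem_insert.mp hx with rfl | hx
      · exact hut
      · rw [Finset.mem_singleton.mp hx]; exact hwt
    · intro h
      exact hwuv (h ▸ (by simp : w ∈ ({u, w} : Finset V)))
    · rintro e'' ⟨he'', hsub'', hne''⟩
      obtain ⟨u'', v'', rfl, huv'', hu'', hv''⟩ := cross_decomp hk he''
      have := pair_subset_triple huv'' (hteq ▸ hsub'')
      rcases this with h3 | h3 | h3
      · exact absurd h3 hne''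
      · exact h3
      · -- {u'',v''} = {v, w} : impossible, it has a vertex at distance k-1 < k
        exfalso
        have hm : u'' ∈ ({v, w} : Finset V) := h3 ▸ (by simp : u'' ∈ ({u'', v''} : Finset V))
        rcases Finset.mem_insert.mp hm with rfl | hm
        · omega
        · rw [Finset.mem_singleton.mp hm] at hu''; omega

lemma cross_card_two {K : AbstractTriangulation V} {b : V} {k : ℕ} {e : Finset V}
    (he : e ∈ crossSet K b k) : e.card = 2 :=
  (mem_edges_iff.mp (Finset.mem_filter.mp he).1).1

lemma cross_union_eq {K : AbstractTriangulation V} {b : V} {k : ℕ}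
    {e e' t : Finset V} (he : e ∈ crossSet K b k) (he' : e' ∈ crossSet K b k)
    (hne : e' ≠ e) (ht : t ∈ K.tris) (h1 : e ⊆ t) (h2 : e' ⊆ t) :
    e ∪ e' = t := by
  have hc : e.card = 2 := cross_card_two he
  have hc' : e'.card = 2 := cross_card_two he'
  have htc : t.card = 3 := K.card_three t ht
  have hint : (e ∩ e').card ≤ 1 := by
    by_contra hcon
    push_neg at hcon
    have h3 : e ∩ e' = e := Finset.eq_of_subset_of_card_le Finset.inter_subset_left (by omega)
    have h4 : e ∩ e' = e' := Finset.eq_of_subset_of_card_le Finset.inter_subset_right (by omega)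
    rw [h3] at h4; exact hne h4.symm
  have hu : 3 ≤ (e ∪ e').card := by
    have := Finset.card_union_add_card_inter e e'
    omega
  exact Finset.eq_of_subset_of_card_le (Finset.union_subset h1 h2) (by omega)

lemma cross_degree {K : AbstractTriangulation V} {b : V} {k : ℕ} (hk : 1 ≤ k)
    {e : Finset V} (he : e ∈ crossSet K b k) :
    (crossGraph K b k).degree e = (K.tris.filter fun t => e ⊆ t).card := by
  classical
  rw [← SimpleGraph.card_neighborFinset_eq_degree]
  have hpart : ∀ t ∈ K.tris.filter (fun t => e ⊆ t),
      ∃ e', (e' ∈ crossSet K b k ∧ e' ⊆ t ∧ e' ≠ e) ∧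
        ∀ e'', (e'' ∈ crossSet K b k ∧ e'' ⊆ t ∧ e'' ≠ e) → e'' = e' := by
    intro t htt
    rw [Finset.mem_filter] at htt
    obtain ⟨e', h1, h2⟩ := partner_exists_unique hk htt.1 he htt.2
    exact ⟨e', h1, h2⟩
  choose pa hpa hpa' using hpart
  refine Finset.card_bij' (fun e' _ => e ∪ e') pa ?_ ?_ ?_ ?_
  · -- maps into the triangle filter
    intro e' he'n
    rw [SimpleGraph.mem_neighborFinset] at he'n
    obtain ⟨hne, _, he'c, t, ht, hs, hs'⟩ := he'n
    have hut := cross_union_eq he he'c (Ne.symm hne) ht hs hs'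
    show e ∪ e' ∈ _
    rw [hut, Finset.mem_filter]
    exact ⟨ht, hs⟩
  · -- partner lands in neighborFinset
    intro t htt
    rw [SimpleGraph.mem_neighborFinset]
    obtain ⟨hp1, hp2, hp3⟩ := hpa t htt
    have htt' := Finset.mem_filter.mp htt
    exact ⟨Ne.symm hp3, he, hp1, t, htt'.1, htt'.2, hp2⟩
  · -- left inverse
    intro e' he'n
    rw [SimpleGraph.mem_neighborFinset] at he'n
    obtain ⟨hne, _, he'c, t, ht, hs, hs'⟩ := he'n
    have hut : e ∪ e' = t := cross_union_eq he he'c (Ne.symm hne) ht hs hs'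
    symm
    apply hpa'
    exact ⟨he'c, Finset.subset_union_right, Ne.symm hne⟩
  · -- right inverse
    intro t htt
    obtain ⟨hp1, hp2, hp3⟩ := hpa t htt
    have htt' := Finset.mem_filter.mp htt
    show e ∪ _ = t
    exact cross_union_eq he hp1 hp3 htt'.1 htt'.2 hp2

lemma cross_filter_card {K : AbstractTriangulation V} {b : V} {k : ℕ}
    {e : Finset V} (he : e ∈ crossSet K b k) :
    (K.tris.filter fun t => e ⊆ t).card = 1 ∨ (K.tris.filter fun t => e ⊆ t).card = 2 := by
  have hedge := (Finset.mem_filter.mp he).1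
  obtain ⟨hc2, ht⟩ := mem_edges_iff.mp hedge
  exact K.edge_mem e hc2 ht

lemma boundary_dist {K : AbstractTriangulation V} {n : ℕ} {f : Fin n → V}
    (hn : 4 ≤ n) (hK : K.IsIsometricFilling n f) (z : Fin n) (hz : z.val = 0)
    (i : Fin n) : K.skeleton.dist (f z) (f i) = min i.val (n - i.val) := by
  rw [hK.2 z i, cycleGraph_dist_eq (show 2 ≤ n by omega)]
  have h1 := fin_sub_val_lin (show 0 < n by omega) i z
  have h2 := fin_sub_val_lin (show 0 < n by omega) z i
  have hi := i.is_lt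
  have b1 := (i - z).is_lt
  have b2 := (z - i).is_lt
  omega

lemma boundary_edge_cross {K : AbstractTriangulation V} {n : ℕ} {f : Fin n → V}
    (hn : 4 ≤ n) (hK : K.IsIsometricFilling n f) (z : Fin n) (hz : z.val = 0)
    {k : ℕ} (i j : Fin n) (hij : (j - i).val = 1 ∨ (i - j).val = 1)
    (hdi : min i.val (n - i.val) + 1 = k) (hdj : min j.val (n - j.val) = k) :
    ({f i, f j} : Finset V) ∈ crossSet K (f z) k ∧
      (K.tris.filter fun t => ({f i, f j} : Finset V) ⊆ t).card = 1 := by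
  have hne : i ≠ j := by
    rintro rfl
    omega
  have hfne : f i ≠ f j := fun h => hne (hK.1.1 h)
  have hadj : K.boundary.Adj (f i) (f j) := by
    rw [hK.1.2.1 i j]
    rw [SimpleGraph.cycleGraph_adj']
    tauto
  have hfil : (K.tris.filter fun t => ({f i, f j} : Finset V) ⊆ t).card = 1 := by
    rw [← boundary_filter_eq]
    exact hadj.2
  refine ⟨?_, hfil⟩
  have hex : ∃ t ∈ K.tris, ({f i, f j} : Finset V) ⊆ t := by
    have : 0 < (K.tris.filter fun t => ({f i, f j} : Finset V) ⊆ t).card := by omega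
    obtain ⟨t, htm⟩ := Finset.card_pos.mp this
    rw [Finset.mem_filter] at htm
    exact ⟨t, htm.1, htm.2⟩
  rw [crossSet, Finset.mem_filter]
  refine ⟨mem_edges_iff.mpr ⟨Finset.card_pair hfne, hex⟩, ⟨f i, by simp, ?_⟩, ⟨f j, by simp, ?_⟩⟩
  · rw [boundary_dist hn hK z hz i]; exact hdi
  · rw [boundary_dist hn hK z hz j]; exact hdj

lemma cross_boundary_classify {K : AbstractTriangulation V} {n : ℕ} {f : Fin n → V}
    (hn : 4 ≤ n) (hK : K.IsIsometricFilling n f) (z : Fin n) (hz : z.val = 0)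
    {k : ℕ} (hk1 : 1 ≤ k) (hk2 : 2 * k ≤ n)
    (i0 j0 i1 j1 : Fin n) (hi0 : i0.val = k - 1) (hj0 : j0.val = k)
    (hi1 : i1.val = n - k) (hj1 : j1.val = (n - k + 1) % n)
    {e : Finset V} (he : e ∈ crossSet K (f z) k)
    (hb : (K.tris.filter fun t => e ⊆ t).card = 1) :
    e = ({f i0, f j0} : Finset V) ∨ e = ({f i1, f j1} : Finset V) := by
  have hM : (k = 1 ∧ j1.val = 0) ∨ (2 ≤ k ∧ j1.val = n - k + 1) := by
    rcases Nat.eq_or_lt_of_le hk1 with h | h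
    · left
      constructor
      · omega
      · rw [hj1, ← h]
        simp [Nat.sub_add_cancel (show 1 ≤ n by omega)]
    · right
      refine ⟨h, ?_⟩
      rw [hj1, Nat.mod_eq_of_lt (by omega)]
  obtain ⟨u, v, rfl, huv, hdu, hdv⟩ := cross_decomp hk1 he
  have hadj : K.boundary.Adj u v := by
    constructor
    · exact huv
    · rw [boundary_filter_eq]
      exact hb
  obtain ⟨⟨i, rfl⟩, ⟨j, rfl⟩⟩ := hK.1.2.2 u v hadj
  have hcyc : (SimpleGraph.cycleGraph n).Adj i j := (hK.1.2.1 i j).mp hadj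
  rw [SimpleGraph.cycleGraph_adj'] at hcyc
  rw [boundary_dist hn hK z hz i] at hdu
  rw [boundary_dist hn hK z hz j] at hdv
  have h1 := fin_sub_val_lin (show 0 < n by omega) i j
  have h2 := fin_sub_val_lin (show 0 < n by omega) j i
  have hi := i.is_lt; have hj := j.is_lt
  have b1 := (i - j).is_lt; have b2 := (j - i).is_lt
  have hgoal : (i.val = k - 1 ∧ j.val = k) ∨ (i.val = j1.val ∧ j.val = n - k) := by
    omega
  rcases hgoal with ⟨hh1, hh2⟩ | ⟨hh1, hh2⟩
  · left
    have : i = i0 := Fin.ext (by omega)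
    subst this
    have : j = j0 := Fin.ext (by omega)
    subst this
    rfl
  · right
    have : i = j1 := Fin.ext (by omega)
    subst this
    have : j = i1 := Fin.ext (by omega)
    subst this
    exact Finset.pair_comm _ _

lemma walk_trans {α : Type*} {G : SimpleGraph α} (P : α → Prop)
    (hstep : ∀ a c, G.Adj a c → P a → P c) :
    ∀ {a c : α}, G.Walk a c → P a → P c := by
  intro a c p
  induction p with
  | nil => exact id
  | cons h q ih => intro hp; exact ih (hstep _ _ h hp)

lemma exists_adj_of_walk_ne {α : Type*} {G : SimpleGraph α} {x y : α}
    (p : G.Walk x y) : x ≠ y → ∃ w, G.Adj w y := by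
  induction p with
  | nil => exact fun h => absurd rfl h
  | @cons a c y hadj q ih =>
    intro _
    by_cases hcy : c = y
    · exact ⟨a, hcy ▸ hadj⟩
    · exact ih hcy

lemma exists_adj_of_reachable_ne {α : Type*} {G : SimpleGraph α} {x y : α}
    (h : G.Reachable x y) (hne : x ≠ y) : ∃ w, G.Adj w y := by
  obtain ⟨p⟩ := h
  exact exists_adj_of_walk_ne p hne

lemma cross_connected {K : AbstractTriangulation V} {n : ℕ} {f : Fin n → V}
    (hn : 4 ≤ n) (hK : K.IsIsometricFilling n f) (z : Fin n) (hz : z.val = 0)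
    {k : ℕ} (hk1 : 1 ≤ k) (hk2 : 2 * k ≤ n)
    (i0 j0 i1 j1 : Fin n) (hi0 : i0.val = k - 1) (hj0 : j0.val = k)
    (hi1 : i1.val = n - k) (hj1 : j1.val = (n - k + 1) % n) :
    (crossGraph K (f z) k).Reachable ({f i0, f j0} : Finset V) ({f i1, f j1} : Finset V) := by
  classical
  have hM : (k = 1 ∧ j1.val = 0) ∨ (2 ≤ k ∧ j1.val = n - k + 1) := by
    rcases Nat.eq_or_lt_of_le hk1 with h | h
    · left
      refine ⟨by omega, ?_⟩
      rw [hj1, ← h]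
      simp [Nat.sub_add_cancel (show 1 ≤ n by omega)]
    · right
      refine ⟨h, ?_⟩
      rw [hj1, Nat.mod_eq_of_lt (by omega)]
  set b := f z with hb
  set e0 : Finset V := {f i0, f j0} with he0def
  set eL : Finset V := {f i1, f j1} with heLdef
  -- e0 is a boundary crossing edge
  have he0 : e0 ∈ crossSet K b k ∧ (K.tris.filter fun t => e0 ⊆ t).card = 1 := by
    apply boundary_edge_cross hn hK z hz i0 j0
    · left
      have h1 := fin_sub_val_lin (show 0 < n by omega) j0 i0
      have b1 := (j0 - i0).is_lt
      omega
    · omega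
    · omega
  have heL : eL ∈ crossSet K b k ∧ (K.tris.filter fun t => eL ⊆ t).card = 1 := by
    have := boundary_edge_cross (k := k) hn hK z hz j1 i1 ?_ ?_ ?_
    · rwa [Finset.pair_comm (f j1) (f i1)] at this
    · right
      have h1 := fin_sub_val_lin (show 0 < n by omega) j1 i1
      have b1 := (j1 - i1).is_lt
      omega
    · omega
    · omega
  have hne0L : e0 ≠ eL := by
    intro h
    have h1 : f i0 ∈ eL := h ▸ (Finset.mem_insert_self _ _ : f i0 ∈ e0)
    have h2 : f j0 ∈ eL := h ▸ (Finset.mem_insert_of_mem (Finset.mem_singleton_self _) : f j0 ∈ e0)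
    rw [heLdef] at h1 h2
    simp only [Finset.mem_insert, Finset.mem_singleton] at h1 h2
    have e1 : i0.val = i1.val ∨ i0.val = j1.val := by
      rcases h1 with h1 | h1
      · left; rw [hK.1.1 h1]
      · right; rw [hK.1.1 h1]
    have e2 : j0.val = i1.val ∨ j0.val = j1.val := by
      rcases h2 with h2 | h2
      · left; rw [hK.1.1 h2]
      · right; rw [hK.1.1 h2]
    omega
  set H := crossGraph K b k with hH
  -- restrict H to the connected component of e0
  let H' : SimpleGraph (Finset V) :=
    { Adj := fun a c => H.Adj a c ∧ H.Reachable e0 a ∧ H.Reachable e0 c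
      symm := by constructor; rintro a c ⟨h1, h2, h3⟩; exact ⟨h1.symm, h3, h2⟩
      loopless := by constructor; rintro a ⟨h1, -⟩; exact h1.ne rfl }
  haveI : DecidableRel H'.Adj := Classical.decRel _
  have hdeg_reach : ∀ a, H.Reachable e0 a → H'.degree a = H.degree a := by
    intro a hra
    rw [← SimpleGraph.card_neighborFinset_eq_degree, ← SimpleGraph.card_neighborFinset_eq_degree]
    congr 1
    ext c
    simp only [SimpleGraph.mem_neighborFinset]
    constructor
    · rintro ⟨h1, -, -⟩; exact h1
    · intro h1; exact ⟨h1, hra, hra.trans h1.reachable⟩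
  have hdeg_unreach : ∀ a, ¬ H.Reachable e0 a → H'.degree a = 0 := by
    intro a hra
    rw [← SimpleGraph.card_neighborFinset_eq_degree, Finset.card_eq_zero]
    ext c
    simp only [SimpleGraph.mem_neighborFinset, Finset.notMem_empty, iff_false]
    rintro ⟨-, h2, -⟩
    exact hra h2
  have hdeg0 : H'.degree e0 = 1 := by
    rw [hdeg_reach e0 (SimpleGraph.Reachable.refl e0)]
    show (crossGraph K b k).degree e0 = 1
    rw [cross_degree hk1 he0.1, he0.2]
  have hodd := H'.odd_card_odd_degree_vertices_ne e0 (by rw [hdeg0]; exact odd_one)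
  have hpos : 0 < (Finset.univ.filter fun w => w ≠ e0 ∧ Odd (H'.degree w)).card := by
    rcases hodd with ⟨c, hc⟩
    omega
  obtain ⟨e', he'mem⟩ := Finset.card_pos.mp hpos
  rw [Finset.mem_filter] at he'mem
  obtain ⟨-, hne', hodd'⟩ := he'mem
  have hre' : H.Reachable e0 e' := by
    by_contra hcon
    rw [hdeg_unreach e' hcon, Nat.odd_iff] at hodd'
    omega
  rw [hdeg_reach e' hre'] at hodd'
  have he'c : e' ∈ crossSet K b k := by
    obtain ⟨w, hw⟩ := exists_adj_of_reachable_ne hre' (Ne.symm hne')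
    exact hw.2.2.1
  have hdeg' : H.degree e' = (K.tris.filter fun t => e' ⊆ t).card := cross_degree hk1 he'c
  have hfc : (K.tris.filter fun t => e' ⊆ t).card = 1 := by
    rcases cross_filter_card he'c with h | h
    · exact h
    · rw [hdeg', h, Nat.odd_iff] at hodd'
      omega
  have := cross_boundary_classify hn hK z hz hk1 hk2 i0 j0 i1 j1 hi0 hj0 hi1 hj1 he'c hfc
  rcases this with h | h
  · exact absurd h hne'
  · rw [heLdef, ← h]
    exact hre'

lemma sph_reach {K : AbstractTriangulation V} {b : V} {k : ℕ} (hk : 1 ≤ k)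
    {e0 : Finset V} (he0 : e0 ∈ crossSet K b k) {v0 : V} (hv0 : v0 ∈ e0)
    (hd0 : K.skeleton.dist b v0 = k) {e' : Finset V}
    (hreach : (crossGraph K b k).Reachable e0 e')
    {v' : V} (hv' : v' ∈ e') (hd' : K.skeleton.dist b v' = k) :
    (sphGraph K b k).Reachable v0 v' := by
  obtain ⟨p⟩ := hreach
  set P : Finset V → Prop := fun e =>
    e ∈ crossSet K b k ∧ ∀ x ∈ e, K.skeleton.dist b x = k → (sphGraph K b k).Reachable v0 x
    with hP
  have hbase : P e0 := by
    refine ⟨he0, ?_⟩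
    intro x hx hdx
    obtain ⟨u, v, he, huv, hdu, hdv⟩ := cross_decomp hk he0
    have hxv : x = v := by
      rw [he, Finset.mem_insert, Finset.mem_singleton] at hx
      rcases hx with rfl | rfl
      · omega
      · rfl
    have hv0v : v0 = v := by
      rw [he, Finset.mem_insert, Finset.mem_singleton] at hv0
      rcases hv0 with rfl | rfl
      · omega
      · rfl
    rw [hxv, ← hv0v]
  have hstep : ∀ a c, (crossGraph K b k).Adj a c → P a → P c := by
    intro a c hadj hPa
    obtain ⟨hne, hac, hcc, t, ht, hat, hct⟩ := hadj
    refine ⟨hcc, ?_⟩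
    intro x hx hdx
    obtain ⟨u, v, hceq, huv, hdu, hdv⟩ := cross_decomp hk hcc
    have hxv : x = v := by
      rw [hceq, Finset.mem_insert, Finset.mem_singleton] at hx
      rcases hx with rfl | rfl
      · omega
      · rfl
    obtain ⟨u', v', haeq, huv', hdu', hdv'⟩ := cross_decomp hk hac
    have hreachv' : (sphGraph K b k).Reachable v0 v' :=
      hPa.2 v' (by rw [haeq]; simp) hdv'
    have hvt : v ∈ t := hct (by rw [hceq]; simp)
    have hv't : v' ∈ t := hat (by rw [haeq]; simp)
    rw [hxv]
    by_cases hvv : v' = v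
    · rw [← hvv]; exact hreachv'
    · refine hreachv'.trans (SimpleGraph.Adj.reachable ?_)
      exact ⟨skel_adj_of_mem ht hv't hvt hvv, hdv', hdv⟩
  have := walk_trans P hstep p hbase
  exact this.2 v' hv' hd'

lemma sph_walk_support {K : AbstractTriangulation V} {b : V} {k : ℕ}
    {x y : V} (q : (sphGraph K b k).Walk x y)
    (hx : K.skeleton.dist b x = k) (hxv : x ∈ K.verts) :
    ∀ v ∈ q.support, v ∈ sph K b k := by
  induction q with
  | nil =>
    intro v hv
    rw [SimpleGraph.Walk.support_nil, List.mem_singleton] at hv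
    rw [hv, sph, Finset.mem_filter]
    exact ⟨hxv, hx⟩
  | @cons a c y h q ih =>
    intro v hv
    rw [SimpleGraph.Walk.support_cons, List.mem_cons] at hv
    rcases hv with rfl | hv
    · rw [sph, Finset.mem_filter]; exact ⟨hxv, hx⟩
    · refine ih h.2.2 ?_ v hv
      obtain ⟨hne, t, ht, hat, hct⟩ := h.1
      exact mem_verts_iff.mpr ⟨t, ht, hct⟩

lemma sph_card_lower {K : AbstractTriangulation V} {b : V} {k : ℕ}
    {x y : V} (hreach : (sphGraph K b k).Reachable x y)
    (hx : K.skeleton.dist b x = k) (hxv : x ∈ K.verts) :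
    K.skeleton.dist x y + 1 ≤ (sph K b k).card := by
  obtain ⟨p⟩ := hreach
  let q := p.toPath
  have hnodup : (q : (sphGraph K b k).Walk x y).support.Nodup := q.2.support_nodup
  have hsub : (q : (sphGraph K b k).Walk x y).support.toFinset ⊆ sph K b k := by
    intro v hv
    rw [List.mem_toFinset] at hv
    exact sph_walk_support _ hx hxv v hv
  have hcard := Finset.card_le_card hsub
  rw [List.toFinset_card_of_nodup hnodup, SimpleGraph.Walk.length_support] at hcard
  have hle : (sphGraph K b k) ≤ K.skeleton := fun u v h => h.1
  have hdist := SimpleGraph.dist_le ((q : (sphGraph K b k).Walk x y).mapLe hle)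
  rw [SimpleGraph.Walk.mapLe, SimpleGraph.Walk.length_map] at hdist
  omega

lemma sum_min_sq : ∀ m : ℕ, m ^ 2 ≤ 4 * (∑ k ∈ Finset.range (m + 1), min k (m - k)) + 1 := by
  intro m
  induction m using Nat.twoStepInduction with
  | zero => simp
  | one => simp [Finset.sum_range_succ]
  | more m ih _ =>
    have key : (∑ k ∈ Finset.range (m + 1), min k (m - k)) + (m + 1) ≤
        ∑ k ∈ Finset.range (m + 2 + 1), min k (m + 2 - k) := by
      have h1 : ∑ k ∈ Finset.range (m + 2 + 1), min k (m + 2 - k) =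
          (∑ k ∈ Finset.range (m + 2), min (k + 1) (m + 2 - (k + 1))) + min 0 (m + 2) :=
        Finset.sum_range_succ' _ _
      have h2 : ∑ k ∈ Finset.range (m + 2), min (k + 1) (m + 2 - (k + 1)) =
          (∑ k ∈ Finset.range (m + 1), min (k + 1) (m + 2 - (k + 1))) +
            min (m + 2) (m + 2 - (m + 2)) :=
        Finset.sum_range_succ _ _
      have h3 : (∑ k ∈ Finset.range (m + 1), (min k (m - k) + 1)) ≤
          ∑ k ∈ Finset.range (m + 1), min (k + 1) (m + 2 - (k + 1)) := by
        apply Finset.sum_le_sum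
        intro i hi
        rw [Finset.mem_range] at hi
        omega
      rw [Finset.sum_add_distrib, Finset.sum_const, Finset.card_range, smul_eq_mul, mul_one] at h3
      omega
    have hsq : (m + 2) ^ 2 = m ^ 2 + 4 * m + 4 := by ring
    omega

lemma icc_sum_eq (m : ℕ) :
    ∑ k ∈ Finset.Icc 1 m, min k (m - k) = ∑ k ∈ Finset.range (m + 1), min k (m - k) := by
  have h : Finset.range (m + 1) = insert 0 (Finset.Icc 1 m) := by
    ext x
    simp only [Finset.mem_range, Finset.mem_insert, Finset.mem_Icc]
    omega
  rw [h, Finset.sum_insert (by simp)]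
  simp

end MainAux


/-- Let `n ≥ 4`. If `K` is an isometric filling of the cycle
`C_n`, then `|V(K)| ≥ n²/8`. -/
theorem discreteGromov_isometric {V : Type} [DecidableEq V] [Fintype V]
    (n : ℕ) (hn : 4 ≤ n)
    (K : AbstractTriangulation V) (f : Fin n → V)
    (hK : K.IsIsometricFilling n f) :
    (n : ℝ) ^ 2 / 8 ≤ (K.verts.card : ℝ) := by
  classical
  have hn0 : (0:ℕ) < n := by omega
  set z : Fin n := ⟨0, hn0⟩ with hzdef
  have hz : z.val = 0 := rfl
  set b := f z with hbdef
  set m := n / 2 with hmdef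
  have hm2 : 2 ≤ m := by omega
  have h2m : 2 * m ≤ n := by omega
  have h2m1 : n ≤ 2 * m + 1 := by omega
  have key : ∀ k, 1 ≤ k → k ≤ m → min (2*k) (n - 2*k) + 1 ≤ (sph K b k).card := by
    intro k hk1 hkm
    have hk2 : 2 * k ≤ n := by omega
    have hkn : k < n := by omega
    set i0 : Fin n := ⟨k-1, by omega⟩ with hi0def
    set j0 : Fin n := ⟨k, by omega⟩ with hj0def
    set i1 : Fin n := ⟨n-k, by omega⟩ with hi1def
    set j1 : Fin n := ⟨(n-k+1) % n, Nat.mod_lt _ (by omega)⟩ with hj1def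
    have hi0 : i0.val = k - 1 := rfl
    have hj0 : j0.val = k := rfl
    have hi1 : i1.val = n - k := rfl
    have hj1 : j1.val = (n - k + 1) % n := rfl
    have hreachH := cross_connected hn hK z hz hk1 hk2 i0 j0 i1 j1 hi0 hj0 hi1 hj1
    have he0 : ({f i0, f j0} : Finset V) ∈ crossSet K b k ∧
        (K.tris.filter fun t => ({f i0, f j0} : Finset V) ⊆ t).card = 1 := by
      apply boundary_edge_cross hn hK z hz i0 j0
      · left
        have h1 := fin_sub_val_lin (show 0 < n by omega) j0 i0
        have b1 := (j0 - i0).is_lt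
        omega
      · omega
      · omega
    have hdj0 : K.skeleton.dist b (f j0) = k := by
      rw [hbdef, boundary_dist hn hK z hz j0]
      omega
    have hdi1 : K.skeleton.dist b (f i1) = k := by
      rw [hbdef, boundary_dist hn hK z hz i1]
      omega
    have hreachS : (sphGraph K b k).Reachable (f j0) (f i1) :=
      sph_reach hk1 he0.1 (Finset.mem_insert_of_mem (Finset.mem_singleton_self _)) hdj0
        hreachH (Finset.mem_insert_self _ _) hdi1
    have hvmem : f j0 ∈ K.verts := by
      obtain ⟨hc2, t, ht, hsub⟩ := mem_edges_iff.mp (Finset.mem_filter.mp he0.1).1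
      exact mem_verts_iff.mpr ⟨t, ht, hsub (Finset.mem_insert_of_mem (Finset.mem_singleton_self _))⟩
    have hs := sph_card_lower hreachS hdj0 hvmem
    have hdistlow : min (2*k) (n - 2*k) ≤ K.skeleton.dist (f j0) (f i1) := by
      by_cases h2kn : 2*k = n
      · omega
      · rw [hK.2 j0 i1, cycleGraph_dist_eq (show 2 ≤ n by omega)]
        have h1 := fin_sub_val_lin (show 0 < n by omega) i1 j0
        have h2 := fin_sub_val_lin (show 0 < n by omega) j0 i1
        have b1 := (i1 - j0).is_lt
        have b2 := (j0 - i1).is_lt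
        omega
    omega
  have hdisj : ∀ a ∈ Finset.Icc 1 m, ∀ c ∈ Finset.Icc 1 m, a ≠ c →
      Disjoint (sph K b a) (sph K b c) := by
    intro a _ c _ hne
    rw [Finset.disjoint_left]
    intro v hva hvc
    rw [sph, Finset.mem_filter] at hva hvc
    exact hne (hva.2 ▸ hvc.2 ▸ rfl)
  have hsum : ∑ k ∈ Finset.Icc 1 m, (sph K b k).card ≤ K.verts.card := by
    rw [← Finset.card_biUnion hdisj]
    apply Finset.card_le_card
    intro v hv
    rw [Finset.mem_biUnion] at hv
    obtain ⟨k, _, hk⟩ := hv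
    exact (Finset.mem_filter.mp hk).1
  have hterm : ∑ k ∈ Finset.Icc 1 m, (min (2*k) (n - 2*k) + 1) ≤
      ∑ k ∈ Finset.Icc 1 m, (sph K b k).card := by
    apply Finset.sum_le_sum
    intro k hk
    rw [Finset.mem_Icc] at hk
    exact key k hk.1 hk.2
  have hlow : 2 * (∑ k ∈ Finset.Icc 1 m, min k (m - k)) + m ≤
      ∑ k ∈ Finset.Icc 1 m, (min (2*k) (n - 2*k) + 1) := by
    have h := Finset.sum_le_sum (f := fun k => 2 * min k (m - k) + 1)
      (g := fun k => min (2*k) (n - 2*k) + 1) (s := Finset.Icc 1 m) ?_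
    · rw [Finset.sum_add_distrib, Finset.sum_const, Nat.card_Icc, ← Finset.mul_sum] at h
      simp only [smul_eq_mul, mul_one] at h
      omega
    · intro k hk
      rw [Finset.mem_Icc] at hk
      show 2 * min k (m - k) + 1 ≤ min (2*k) (n - 2*k) + 1
      omega
  have hT := sum_min_sq m
  rw [← icc_sum_eq] at hT
  have hn2 : n^2 ≤ 4*m^2 + 4*m + 1 := by
    calc n^2 ≤ (2*m+1)^2 := Nat.pow_le_pow_left h2m1 2
    _ = 4*m^2 + 4*m + 1 := by ring
  have hfinal : n^2 ≤ 8 * K.verts.card := by linarith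
  have hRcast : ((n:ℝ))^2 ≤ 8 * (K.verts.card : ℝ) := by exact_mod_cast hfinal
  linarith
end

section
/- Let n ≥ 4 be an integer, fix vertices x, y of the cycle graph C_n that are not adjacent in C_n, and let L and R denote the two connected components of C_n − x − y. If ℓ_1, …, ℓ_k are distinct vertices of L and r_1, …, r_k are distinct vertices of R, then ∑_{i=1}^k d_{C_n}(ℓ_i, r_i) ≥ k(k+2)/2. -/
open SimpleGraph Finset
open Fin.CommRing Fin.NatCast

/-- The cycle graph `C_n` with the vertices `x` and `y` deleted (as a graph on
`Fin n` in which `x` and `y` have become isolated). -/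
def deletedCycle (n : ℕ) (x y : Fin n) : SimpleGraph (Fin n) where
  Adj u v := (SimpleGraph.cycleGraph n).Adj u v ∧ u ≠ x ∧ u ≠ y ∧ v ≠ x ∧ v ≠ y
  symm := ⟨by rintro u v ⟨h, h1, h2, h3, h4⟩; exact ⟨h.symm, h3, h4, h1, h2⟩⟩
  loopless := ⟨by rintro u ⟨h, -⟩; exact h.ne rfl⟩



lemma cg_walk_end {m : ℕ} {u v : Fin (m+2)} (W : (cycleGraph (m+2)).Walk u v) :
    ∃ s : ℕ, s ≤ W.length ∧ (v = u + (s : Fin (m+2)) ∨ v = u - (s : Fin (m+2))) := by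
  induction W with
  | nil => exact ⟨0, by simp⟩
  | @cons a b c h W ih =>
    obtain ⟨s, hs, hv⟩ := ih
    rw [cycleGraph_adj] at h
    rcases h with h | h
    · have hb : b = a - 1 := by rw [← h]; ring
      subst hb
      rcases hv with hv | hv
      · rcases Nat.eq_zero_or_pos s with rfl | hs1
        · exact ⟨1, by simp, Or.inr (by push_cast; rw [hv]; push_cast; ring)⟩
        · refine ⟨s - 1, by rw [SimpleGraph.Walk.length_cons]; omega, Or.inl ?_⟩
          rw [hv, Nat.cast_sub hs1]
          push_cast; ring
      · exact ⟨s + 1, by simp; omega, Or.inr (by rw [hv]; push_cast; ring)⟩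
    · have hb : b = a + 1 := by rw [← h]; ring
      subst hb
      rcases hv with hv | hv
      · exact ⟨s + 1, by simp; omega, Or.inl (by rw [hv]; push_cast; ring)⟩
      · rcases Nat.eq_zero_or_pos s with rfl | hs1
        · exact ⟨1, by simp, Or.inl (by push_cast; rw [hv]; push_cast; ring)⟩
        · refine ⟨s - 1, by rw [SimpleGraph.Walk.length_cons]; omega, Or.inr ?_⟩
          rw [hv, Nat.cast_sub hs1]
          push_cast; ring

lemma cg_exists_walk {m : ℕ} (u : Fin (m+2)) (t : ℕ) :
    ∃ W : (cycleGraph (m+2)).Walk u (u + (t : Fin (m+2))), W.length = t := by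
  induction t with
  | zero =>
    have h0 : u + ((0:ℕ) : Fin (m+2)) = u := by push_cast; ring
    rw [h0]
    exact ⟨SimpleGraph.Walk.nil, rfl⟩
  | succ t ih =>
    obtain ⟨W, hW⟩ := ih
    have hadj : (cycleGraph (m+2)).Adj (u + (t : Fin (m+2))) (u + ((t+1 : ℕ) : Fin (m+2))) := by
      rw [cycleGraph_adj]
      right
      push_cast
      ring
    exact ⟨W.concat hadj, by rw [SimpleGraph.Walk.length_concat, hW]⟩

lemma cg_dist_ub {m : ℕ} (u : Fin (m+2)) (t : ℕ) :
    (cycleGraph (m+2)).dist u (u + (t : Fin (m+2))) ≤ t := by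
  obtain ⟨W, hW⟩ := cg_exists_walk u t
  exact le_trans (SimpleGraph.dist_le W) (le_of_eq hW)

lemma cg_dist_lb {m : ℕ} (u v : Fin (m+2)) (t : ℕ) (h : v = u + (t : Fin (m+2)))
    (h1 : 1 ≤ t) (h2 : t ≤ m + 1) :
    min t (m + 2 - t) ≤ (cycleGraph (m+2)).dist u v := by
  obtain ⟨W0, hW0⟩ := cg_exists_walk u t
  have hreach : (cycleGraph (m+2)).Reachable u v := by rw [h]; exact ⟨W0⟩
  obtain ⟨W, hW⟩ := hreach.exists_walk_length_eq_dist
  rw [← hW]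
  obtain ⟨s, hs, hv⟩ := cg_walk_end W
  rcases hv with hv | hv
  · have heq : (s : Fin (m+2)) = (t : Fin (m+2)) := by
      have h' := h.symm.trans hv
      linear_combination -h'
    have hsval : s % (m+2) = t := by
      have := congrArg Fin.val heq
      simp only [Fin.val_natCast] at this
      rw [Nat.mod_eq_of_lt (by omega : t < m + 2)] at this
      exact this
    have := Nat.mod_le s (m+2)
    omega
  · have heq : ((s + t : ℕ) : Fin (m+2)) = 0 := by
      have h' := h.symm.trans hv
      push_cast
      linear_combination h'
    have hsval : (s + t) % (m+2) = 0 := by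
      have := congrArg Fin.val heq
      simp only [Fin.val_natCast, Fin.val_zero] at this
      exact this
    have := Nat.le_of_dvd (by omega) (Nat.dvd_of_mod_eq_zero hsval)
    omega


lemma count_lemma {k : ℕ} (f : Fin k → ℕ) (h1 : ∀ i, 1 ≤ f i)
    (h2 : ∀ v : ℕ, (univ.filter (fun i => f i = v)).card ≤ 2) :
    k * (k + 2) ≤ 4 * ∑ i, f i := by
  set T := (k + 1) / 2 with hT
  -- Step A: card of low-value indices
  have hA : ∀ t : ℕ, (univ.filter (fun i => f i ≤ t)).card ≤ 2 * t := by
    intro t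
    have := Finset.card_eq_sum_card_fiberwise
      (f := f) (s := univ.filter (fun i => f i ≤ t)) (t := Finset.Icc 1 t)
      (fun i hi => by simp at hi ⊢; exact ⟨h1 i, hi⟩)
    rw [this]
    calc ∑ v ∈ Finset.Icc 1 t, ((univ.filter (fun i => f i ≤ t)).filter (fun i => f i = v)).card
        ≤ ∑ v ∈ Finset.Icc 1 t, 2 := by
          apply Finset.sum_le_sum
          intro v _
          refine le_trans (Finset.card_le_card ?_) (h2 v)
          intro i hi
          simp at hi ⊢
          exact hi.2
      _ = 2 * t := by simp [Nat.Icc_eq_range', mul_comm]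
  -- Step B
  have hB : ∀ t : ℕ, k ≤ (univ.filter (fun i => t < f i)).card + 2 * t := by
    intro t
    have := Finset.card_filter_add_card_filter_not
      (s := (univ : Finset (Fin k))) (p := fun i => t < f i)
    simp only [not_lt] at this
    have h3 := hA t
    have hk : (univ : Finset (Fin k)).card = k := by simp
    omega
  -- Step C: lower bound the sum by the double count
  have hC : ∑ t ∈ Finset.range T, (univ.filter (fun i => t < f i)).card ≤ ∑ i, f i := by
    have hswap : ∑ t ∈ Finset.range T, (univ.filter (fun i => t < f i)).card
        = ∑ i : Fin k, ((Finset.range T).filter (fun t => t < f i)).card := by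
      simp only [Finset.card_filter]
      rw [Finset.sum_comm]
    rw [hswap]
    apply Finset.sum_le_sum
    intro i _
    calc ((Finset.range T).filter (fun t => t < f i)).card
        ≤ (Finset.range T ∩ Finset.range (f i)).card := by
          apply Finset.card_le_card
          intro t ht
          simp at ht ⊢
          omega
      _ ≤ (Finset.range (f i)).card := Finset.card_le_card Finset.inter_subset_right
      _ = f i := by simp
  -- combine
  have hsum : T * k ≤ ∑ t ∈ Finset.range T, (univ.filter (fun i => t < f i)).card + 2 * (∑ t ∈ Finset.range T, t) := by
    rw [Finset.mul_sum, ← Finset.sum_add_distrib]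
    calc T * k = ∑ _t ∈ Finset.range T, k := by rw [Finset.sum_const, Finset.card_range, smul_eq_mul, mul_comm]
      _ ≤ _ := Finset.sum_le_sum (fun t _ => hB t)
  have hgauss : (∑ t ∈ Finset.range T, t) * 2 = T * (T - 1) := Finset.sum_range_id_mul_two T
  rcases Nat.even_or_odd k with ⟨j, hj⟩ | ⟨j, hj⟩
  · have hTj : T = j := by omega
    subst hj; rw [hTj] at hsum hgauss hC
    rcases Nat.eq_zero_or_pos j with rfl | hj0
    · simpa using hC
    · obtain ⟨j', rfl⟩ : ∃ j', j = j' + 1 := ⟨j - 1, by omega⟩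
      simp only [Nat.add_sub_cancel] at hgauss
      nlinarith [hC, hsum, hgauss]
  · have hTj : T = j + 1 := by omega
    subst hj; rw [hTj] at hsum hgauss hC
    simp only [Nat.add_sub_cancel] at hgauss
    nlinarith [hC, hsum, hgauss]

lemma fin_val_ne_zero {m : ℕ} {a x : Fin (m+2)} (h : a ≠ x) : (a - x).val ≠ 0 := by
  intro hc
  apply h
  have : a - x = 0 := Fin.ext (by simpa using hc)
  rwa [sub_eq_zero] at this

lemma low_inv {m : ℕ} {x y u v : Fin (m+2)} (hμ2 : (y - x).val ≤ m)
    (W : (deletedCycle (m+2) x y).Walk u v)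
    (hu : (u - x).val < (y - x).val) : (v - x).val < (y - x).val := by
  induction W with
  | nil => exact hu
  | @cons a b c h W ih =>
    apply ih
    obtain ⟨hadj, hax, hay, hbx, hby⟩ := h
    rw [cycleGraph_adj] at hadj
    have hax' : (a - x).val ≠ 0 := fin_val_ne_zero hax
    have hbx' : (b - x).val ≠ 0 := fin_val_ne_zero hbx
    have hby' : (b - x).val ≠ (y - x).val := by
      intro hcon
      exact hby (by rwa [Fin.val_eq_val, sub_left_inj] at hcon)
    rcases hadj with h1 | h1
    · have hb : b - x = (a - x) - 1 := by linear_combination -h1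
      have hval : (b - x).val = (a - x).val - 1 := by
        rw [hb, Fin.coe_sub_one, if_neg]
        intro hcon
        exact hax' (by rw [hcon]; rfl)
      omega
    · have hb : b - x = (a - x) + 1 := by linear_combination h1
      have hne : a - x ≠ Fin.last (m+1) := by
        intro hcon
        have : (a - x).val = m + 1 := by rw [hcon]; rfl
        omega
      have hval : (b - x).val = (a - x).val + 1 := by
        rw [hb, Fin.val_add_one, if_neg hne]
      omega

lemma key {m : ℕ} (x : Fin (m+2)) (μ : ℕ) (hμ1 : 2 ≤ μ) (hμ2 : μ ≤ m)
    {k : ℕ} (ℓ r : Fin k → Fin (m+2))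
    (hl : ∀ i, 1 ≤ (ℓ i - x).val ∧ (ℓ i - x).val < μ)
    (hr : ∀ i, μ < (r i - x).val)
    (hlinj : Function.Injective ℓ) (hrinj : Function.Injective r) :
    k * (k + 2) ≤ 2 * ∑ i, (cycleGraph (m+2)).dist (ℓ i) (r i) := by
  have hbN : ∀ i, (r i - x).val ≤ m + 1 := fun i => by have := (r i - x).isLt; omega
  have hainj : Function.Injective (fun i => (ℓ i - x).val) := by
    intro i j hij
    apply hlinj
    have h2 : ℓ i - x = ℓ j - x := Fin.val_injective hij
    exact sub_left_inj.mp h2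
  have hbinj : Function.Injective (fun i => (r i - x).val) := by
    intro i j hij
    apply hrinj
    have h2 : r i - x = r j - x := Fin.val_injective hij
    exact sub_left_inj.mp h2
  have hdist : ∀ i, min ((ℓ i - x).val) (μ - (ℓ i - x).val) + min ((r i - x).val - μ) (m + 2 - (r i - x).val)
      ≤ (cycleGraph (m+2)).dist (ℓ i) (r i) := by
    intro i
    have h1 := hl i
    have h2 := hr i
    have h3 := hbN i
    have hcast : r i = ℓ i + (((r i - x).val - (ℓ i - x).val : ℕ) : Fin (m+2)) := by
      have hc : (((r i - x).val - (ℓ i - x).val : ℕ) : Fin (m+2)) = (r i - x) - (ℓ i - x) := by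
        rw [Nat.cast_sub (by omega)]
        congr 1 <;> exact Fin.cast_val_eq_self _
      rw [hc]; ring
    have hlb := cg_dist_lb (ℓ i) (r i) ((r i - x).val - (ℓ i - x).val) hcast (by omega) (by omega)
    omega
  have hcount1 : k * (k + 2) ≤ 4 * ∑ i, min ((ℓ i - x).val) (μ - (ℓ i - x).val) := by
    apply count_lemma
    · intro i; have := hl i; omega
    · intro v
      calc (univ.filter (fun i => min ((ℓ i - x).val) (μ - (ℓ i - x).val) = v)).card
          ≤ ({v, μ - v} : Finset ℕ).card := by
            apply Finset.card_le_card_of_injOn (fun i => (ℓ i - x).val)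
            · intro i hi
              simp only [Finset.mem_coe, Finset.mem_filter, Finset.mem_univ, true_and] at hi
              have := hl i
              simp only [Finset.mem_coe, Finset.mem_insert, Finset.mem_singleton]
              omega
            · intro i _ j _ hij
              exact hainj hij
        _ ≤ 2 := le_trans (Finset.card_insert_le _ _) (by simp)
  have hcount2 : k * (k + 2) ≤ 4 * ∑ i, min ((r i - x).val - μ) (m + 2 - (r i - x).val) := by
    apply count_lemma
    · intro i; have := hr i; have := hbN i; omega
    · intro v
      calc (univ.filter (fun i => min ((r i - x).val - μ) (m + 2 - (r i - x).val) = v)).card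
          ≤ ({μ + v, m + 2 - v} : Finset ℕ).card := by
            apply Finset.card_le_card_of_injOn (fun i => (r i - x).val)
            · intro i hi
              simp only [Finset.mem_coe, Finset.mem_filter, Finset.mem_univ, true_and] at hi
              have := hr i
              have := hbN i
              simp only [Finset.mem_coe, Finset.mem_insert, Finset.mem_singleton]
              omega
            · intro i _ j _ hij
              exact hbinj hij
        _ ≤ 2 := le_trans (Finset.card_insert_le _ _) (by simp)
  have hsum : ∑ i, (min ((ℓ i - x).val) (μ - (ℓ i - x).val) + min ((r i - x).val - μ) (m + 2 - (r i - x).val))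
      ≤ ∑ i, (cycleGraph (m+2)).dist (ℓ i) (r i) :=
    Finset.sum_le_sum (fun i _ => hdist i)
  rw [Finset.sum_add_distrib] at hsum
  omega

/-- Let `x,y` be nonadjacent vertices of `C_n` (`n ≥ 4`) and
`L,R` the two connected components of `C_n - x - y`. If `ℓ₁,…,ℓ_k ∈ L` are
distinct and `r₁,…,r_k ∈ R` are distinct, then
`∑ d_{C_n}(ℓᵢ,rᵢ) ≥ k(k+2)/2`. -/
theorem pathSum (n : ℕ) (hn : 4 ≤ n)
    (x y : Fin n) (hxy : x ≠ y) (hnadj : ¬ (SimpleGraph.cycleGraph n).Adj x y)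
    (L R : Set (Fin n))
    (hLne : L.Nonempty) (hRne : R.Nonempty) (hdisj : Disjoint L R)
    (hxL : x ∉ L) (hyL : y ∉ L) (hxR : x ∉ R) (hyR : y ∉ R)
    (hcover : ∀ u : Fin n, u ≠ x → u ≠ y → u ∈ L ∨ u ∈ R)
    (hLconn : ∀ u ∈ L, ∀ v ∈ L, (deletedCycle n x y).Reachable u v)
    (hRconn : ∀ u ∈ R, ∀ v ∈ R, (deletedCycle n x y).Reachable u v)
    (hLR : ∀ u ∈ L, ∀ v ∈ R, ¬ (deletedCycle n x y).Reachable u v)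
    (k : ℕ) (ℓ r : Fin k → Fin n)
    (hℓL : ∀ i, ℓ i ∈ L) (hrR : ∀ i, r i ∈ R)
    (hℓinj : Function.Injective ℓ) (hrinj : Function.Injective r) :
    k * (k + 2) ≤ 2 * ∑ i : Fin k, (SimpleGraph.cycleGraph n).dist (ℓ i) (r i) := by
  obtain ⟨m, rfl⟩ : ∃ m, n = m + 2 := ⟨n - 2, by omega⟩
  have hm : 2 ≤ m := by omega
  rcases Nat.eq_zero_or_pos k with rfl | hk
  · simp
  set μ : ℕ := (y - x).val with hμdef
  -- basic facts about μ
  have hμ0 : μ ≠ 0 := fin_val_ne_zero hxy.symm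
  have hμ1' : μ ≠ 1 := by
    intro hcon
    apply hnadj
    rw [cycleGraph_adj]
    right
    apply Fin.val_injective
    rw [← hμdef, hcon]
    simp [Fin.val_one]
  have hμlt : μ < m + 2 := (y - x).isLt
  have hμtop : μ ≠ m + 1 := by
    intro hcon
    apply hnadj
    rw [cycleGraph_adj]
    left
    have hlast : y - x = Fin.last (m+1) := Fin.val_injective (by rw [← hμdef, hcon]; rfl)
    have h0 : (y - x) + 1 = 0 := by
      apply Fin.val_injective
      rw [Fin.val_add_one, if_pos hlast]
      rfl
    linear_combination -h0
  have hμ1 : 2 ≤ μ := by omega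
  have hμ2 : μ ≤ m := by omega
  -- generic facts for vertices distinct from x and y
  have hne : ∀ u : Fin (m+2), u ≠ x → u ≠ y →
      1 ≤ (u - x).val ∧ (u - x).val ≠ μ ∧ (u - x).val ≤ m + 1 := by
    intro u hux huy
    refine ⟨Nat.one_le_iff_ne_zero.mpr (fin_val_ne_zero hux), ?_, by have := (u - x).isLt; omega⟩
    intro hcon
    apply huy
    have : u - x = y - x := Fin.val_injective hcon
    exact sub_left_inj.mp this
  have hLmem : ∀ u ∈ L, u ≠ x ∧ u ≠ y :=
    fun u hu => ⟨fun h => hxL (h ▸ hu), fun h => hyL (h ▸ hu)⟩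
  have hRmem : ∀ u ∈ R, u ≠ x ∧ u ≠ y :=
    fun u hu => ⟨fun h => hxR (h ▸ hu), fun h => hyR (h ▸ hu)⟩
  -- low-side invariance under reachability
  have hinv : ∀ u v : Fin (m+2), (deletedCycle (m+2) x y).Reachable u v →
      (u - x).val < μ → (v - x).val < μ := by
    intro u v hr hu
    obtain ⟨W⟩ := hr
    exact low_inv hμ2 W hu
  -- the two witnesses
  have hw1 : ∃ w : Fin (m+2), w ≠ x ∧ w ≠ y ∧ (w - x).val = 1 := by
    refine ⟨x + (1 : Fin (m+2)), ?_, ?_, ?_⟩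
    · intro hcon
      have : (1 : Fin (m+2)) = 0 := by linear_combination hcon
      have := congrArg Fin.val this
      simp [Fin.val_one] at this
    · intro hcon
      have h1 : y - x = 1 := by linear_combination -hcon
      have := congrArg Fin.val h1
      simp [Fin.val_one] at this
      omega
    · rw [add_sub_cancel_left]
      simp [Fin.val_one]
  have hw2 : ∃ w : Fin (m+2), w ≠ x ∧ w ≠ y ∧ (w - x).val = μ + 1 := by
    refine ⟨x + ((μ + 1 : ℕ) : Fin (m+2)), ?_, ?_, ?_⟩
    · intro hcon
      have : ((μ + 1 : ℕ) : Fin (m+2)) = 0 := by linear_combination hcon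
      have := congrArg Fin.val this
      simp only [Fin.val_natCast, Fin.val_zero] at this
      rw [Nat.mod_eq_of_lt (by omega)] at this
      omega
    · intro hcon
      have h1 : y - x = ((μ + 1 : ℕ) : Fin (m+2)) := by linear_combination -hcon
      have := congrArg Fin.val h1
      simp only [Fin.val_natCast] at this
      rw [Nat.mod_eq_of_lt (by omega)] at this
      omega
    · rw [add_sub_cancel_left]
      simp only [Fin.val_natCast]
      exact Nat.mod_eq_of_lt (by omega)
  set i0 : Fin k := ⟨0, hk⟩ with hi0
  by_cases hLlow : (ℓ i0 - x).val < μ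
  · -- L is low
    have hLall : ∀ u ∈ L, (u - x).val < μ := fun u hu =>
      hinv (ℓ i0) u (hLconn _ (hℓL i0) u hu) hLlow
    -- R must be high
    have hRall : ∀ u ∈ R, μ < (u - x).val := by
      intro u hu
      by_contra hcon
      push_neg at hcon
      obtain ⟨hux, huy⟩ := hRmem u hu
      have h1 := hne u hux huy
      have hulow : (u - x).val < μ := by omega
      have hRlow : ∀ v ∈ R, (v - x).val < μ := fun v hv =>
        hinv u v (hRconn u hu v hv) hulow
      obtain ⟨w, hwx, hwy, hwval⟩ := hw2
      rcases hcover w hwx hwy with hw | hw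
      · have := hLall w hw; omega
      · have := hRlow w hw; omega
    exact key x μ hμ1 hμ2 ℓ r
      (fun i => ⟨(hne (ℓ i) (hLmem _ (hℓL i)).1 (hLmem _ (hℓL i)).2).1, hLall _ (hℓL i)⟩)
      (fun i => hRall _ (hrR i)) hℓinj hrinj
  · -- L is high, R is low
    have hLhigh : ∀ u ∈ L, μ < (u - x).val := by
      intro u hu
      by_contra hcon
      push_neg at hcon
      obtain ⟨hux, huy⟩ := hLmem u hu
      have h1 := hne u hux huy
      have hulow : (u - x).val < μ := by omega
      exact hLlow (hinv u (ℓ i0) (hLconn u hu _ (hℓL i0)) hulow)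
    have hRlow : ∀ u ∈ R, (u - x).val < μ := by
      intro u hu
      by_contra hcon
      push_neg at hcon
      obtain ⟨hux, huy⟩ := hRmem u hu
      have h1 := hne u hux huy
      have huhigh : ∀ v ∈ R, μ < (v - x).val := by
        intro v hv
        by_contra hcon2
        push_neg at hcon2
        obtain ⟨hvx, hvy⟩ := hRmem v hv
        have h2 := hne v hvx hvy
        have hvlow : (v - x).val < μ := by omega
        have := hinv v u (hRconn v hv u hu) hvlow
        omega
      obtain ⟨w, hwx, hwy, hwval⟩ := hw1
      rcases hcover w hwx hwy with hw | hw
      · have := hLhigh w hw; omega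
      · have := huhigh w hw; omega
    have hkey := key x μ hμ1 hμ2 r ℓ
      (fun i => ⟨(hne (r i) (hRmem _ (hrR i)).1 (hRmem _ (hrR i)).2).1, hRlow _ (hrR i)⟩)
      (fun i => hLhigh _ (hℓL i)) hrinj hℓinj
    calc k * (k + 2) ≤ 2 * ∑ i : Fin k, (SimpleGraph.cycleGraph (m+2)).dist (r i) (ℓ i) := hkey
      _ = 2 * ∑ i : Fin k, (SimpleGraph.cycleGraph (m+2)).dist (ℓ i) (r i) := by
          congr 1
          exact Finset.sum_congr rfl (fun i _ => SimpleGraph.dist_comm)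
end
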